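/- On the polynomial Poisson algebra ℝ[J_a] of sl(2,ℝ)* with brackets {J₀,J₊} = J₊, {J₀,J₋} = -J₋, {J₊,J₋} = 2J₀, any polynomial P(J₀,J₊,J₋) that Poisson-commutes with J₋ and with J₀ is a polynomial in J₋ and the Casimir element W = J₊J₋ + J₀². -/

import Mathlib

open MvPolynomial

/-- Variables: `0 ↦ J₀`, `1 ↦ J₊`, `2 ↦ J₋`.  The Kirillov–Poisson bracket of
sl(2,ℝ)*: the unique antisymmetric biderivation on `ℝ[J₀,J₊,J₋]` with
`{J₀,J₊} = J₊`, `{J₀,J₋} = -J₋`, `{J₊,J₋} = 2J₀`. -/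
noncomputable def sl2PB (P Q : MvPolynomial (Fin 3) ℝ) : MvPolynomial (Fin 3) ℝ :=
  X 1 * (pderiv 0 P * pderiv 1 Q - pderiv 1 P * pderiv 0 Q)
  - X 2 * (pderiv 0 P * pderiv 2 Q - pderiv 2 P * pderiv 0 Q)
  + 2 * X 0 * (pderiv 1 P * pderiv 2 Q - pderiv 2 P * pderiv 1 Q)

-- === auxiliary lemmas ===

-- coefficient of X i * pderiv i p
lemma coeff_X_mul_pderiv {n : ℕ} (i : Fin n) (p : MvPolynomial (Fin n) ℝ) (m : Fin n →₀ ℕ) :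
    coeff m (X i * pderiv i p) = (m i : ℝ) * coeff m p := by
  induction p using MvPolynomial.induction_on' with
  | monomial m' c =>
    rw [pderiv_monomial]
    by_cases h : m' = m
    · subst h
      by_cases h0 : m' i = 0
      · simp [h0, coeff_monomial]
      · rw [X, monomial_mul, one_mul]
        have : Finsupp.single i 1 + (m' - Finsupp.single i 1) = m' := by
          ext j
          by_cases hj : j = i
          · subst hj; simp [Nat.add_sub_cancel' (Nat.one_le_iff_ne_zero.mpr h0)]
          · simp [Finsupp.single_apply, Ne.symm hj, hj]
        rw [this]
        simp [coeff_monomial]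
        ring
    · by_cases h0 : m' i = 0
      · simp [h0, coeff_monomial, Ne.symm h, h]
      · rw [X, monomial_mul, one_mul]
        have hne : Finsupp.single i 1 + (m' - Finsupp.single i 1) ≠ m := by
          have : Finsupp.single i 1 + (m' - Finsupp.single i 1) = m' := by
            ext j
            by_cases hj : j = i
            · subst hj; simp [Nat.add_sub_cancel' (Nat.one_le_iff_ne_zero.mpr h0)]
            · simp [Finsupp.single_apply, Ne.symm hj, hj]
          rw [this]; exact h
        simp [coeff_monomial, hne, Ne.symm h, h]
  | add p q hp hq =>
    simp [map_add, mul_add, coeff_add, hp, hq, mul_add]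

lemma coeff_pderiv' {n : ℕ} (i : Fin n) (p : MvPolynomial (Fin n) ℝ) (m : Fin n →₀ ℕ) :
    coeff m (pderiv i p) = ((m i : ℝ) + 1) * coeff (m + Finsupp.single i 1) p := by
  induction p using MvPolynomial.induction_on' with
  | monomial m' c =>
    rw [pderiv_monomial]
    by_cases h : m' = m + Finsupp.single i 1
    · subst h
      have h1 : (m + Finsupp.single i 1) - Finsupp.single i 1 = m := by
        ext j; by_cases hj : j = i <;> simp [Finsupp.single_apply, hj]
      rw [h1]
      simp [coeff_monomial, Finsupp.add_apply]
      ring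
    · have hne : m' - Finsupp.single i 1 ≠ m ∨ (m' i : ℝ) = 0 := by
        by_cases h0 : m' i = 0
        · right; simp [h0]
        · left
          intro he
          apply h
          rw [← he]
          ext j
          by_cases hj : j = i
          · subst hj; simp [Nat.sub_add_cancel (Nat.one_le_iff_ne_zero.mpr h0)]
          · have : i ≠ j := fun h' => hj h'.symm
            simp [Finsupp.single_apply, this]
      rcases hne with hne | hz
      · simp [coeff_monomial, hne, h]
      · simp [coeff_monomial, h, hz]
  | add p q hp hq => simp [hp, hq]; ring

-- chain rule
lemma pderiv_aeval_chain {n k : ℕ} (f : Fin n → MvPolynomial (Fin k) ℝ) (i : Fin k)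
    (q : MvPolynomial (Fin n) ℝ) :
    pderiv i (aeval f q) = ∑ j, aeval f (pderiv j q) * pderiv i (f j) := by
  induction q using MvPolynomial.induction_on with
  | C a => simp
  | add p q hp hq =>
    rw [map_add, map_add, hp, hq, ← Finset.sum_add_distrib]
    exact Finset.sum_congr rfl fun j _ => by rw [map_add, map_add, add_mul]
  | mul_X p j hp =>
    have key : ∀ j' : Fin n, aeval f (pderiv j' (p * X j)) * pderiv i (f j')
        = aeval f (pderiv j' p) * pderiv i (f j') * f j
          + (if j' = j then aeval f p * pderiv i (f j) else 0) := by
      intro j'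
      rw [Derivation.leibniz, pderiv_X, smul_eq_mul, smul_eq_mul]
      by_cases h : j' = j
      · subst h; simp [map_add, map_mul]; ring
      · simp [h, map_mul, Pi.single_apply]; ring
    rw [map_mul, aeval_X, Derivation.leibniz, smul_eq_mul, smul_eq_mul, hp,
      Finset.sum_congr rfl (fun j' _ => key j'), Finset.sum_add_distrib,
      Finset.sum_ite_eq' Finset.univ j, Finset.mul_sum]
    simp only [Finset.mem_univ, if_true]
    rw [add_comm]
    congr 1
    exact Finset.sum_congr rfl fun j' _ => by ring

lemma aeval_monomial_fin2 {S : Type*} [CommRing S] [Algebra ℝ S] (f : Fin 2 → S)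
    (d : Fin 2 →₀ ℕ) (c : ℝ) :
    aeval f (monomial d c) = algebraMap ℝ S c * (f 0 ^ d 0 * f 1 ^ d 1) := by
  rw [aeval_monomial, Finsupp.prod_fintype _ _ (fun i => pow_zero _), Fin.prod_univ_two]

lemma monomial_fin3 (m : Fin 3 →₀ ℕ) (c : ℝ) :
    (monomial m c : MvPolynomial (Fin 3) ℝ) = C c * (X 0 ^ m 0 * X 1 ^ m 1 * X 2 ^ m 2) := by
  rw [monomial_eq, Finsupp.prod_fintype _ _ (fun i => pow_zero _), Fin.prod_univ_three]

noncomputable def emb (d : Fin 2 →₀ ℕ) : Fin 3 →₀ ℕ :=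
  Finsupp.single 0 (d 0) + Finsupp.single 1 (d 1) + Finsupp.single 2 (d 1)

@[simp] lemma emb_zero (d : Fin 2 →₀ ℕ) : emb d 0 = d 0 := by
  simp [emb, Finsupp.single_apply]

@[simp] lemma emb_one (d : Fin 2 →₀ ℕ) : emb d 1 = d 1 := by
  simp [emb, Finsupp.single_apply]

@[simp] lemma emb_two (d : Fin 2 →₀ ℕ) : emb d 2 = d 1 := by
  simp [emb, Finsupp.single_apply]

lemma emb_inj : Function.Injective emb := by
  intro d d' h
  ext j
  fin_cases j
  · have := congrArg (fun m => m 0) h; simpa using this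
  · have := congrArg (fun m => m 1) h; simpa using this

lemma aeval_X0X1X2 (q : MvPolynomial (Fin 2) ℝ) :
    aeval ![(X 0 : MvPolynomial (Fin 3) ℝ), X 1 * X 2] q
      = ∑ d ∈ q.support, monomial (emb d) (coeff d q) := by
  conv_lhs => rw [q.as_sum]
  rw [map_sum]
  refine Finset.sum_congr rfl fun d _ => ?_
  rw [aeval_monomial_fin2, monomial_fin3]
  simp only [Matrix.cons_val_zero, Matrix.cons_val_one, Matrix.head_cons,
    emb_zero, emb_one, emb_two, algebraMap_eq]
  rw [mul_pow]
  ring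

lemma coeff_emb (q : MvPolynomial (Fin 2) ℝ) (d : Fin 2 →₀ ℕ) :
    coeff (emb d) (aeval ![(X 0 : MvPolynomial (Fin 3) ℝ), X 1 * X 2] q) = coeff d q := by
  rw [aeval_X0X1X2, coeff_sum]
  rw [Finset.sum_congr rfl (fun d' _ => coeff_monomial (emb d) (emb d') (coeff d' q))]
  simp only [emb_inj.eq_iff]
  rw [Finset.sum_ite_eq' q.support d (fun x => coeff x q)]
  by_cases h : d ∈ q.support
  · simp [h]
  · simp [h, notMem_support_iff.mp h]

lemma aeval_X0X1X2_inj (q : MvPolynomial (Fin 2) ℝ)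
    (h : aeval ![(X 0 : MvPolynomial (Fin 3) ℝ), X 1 * X 2] q = 0) : q = 0 := by
  ext d
  rw [← coeff_emb q d, h]
  simp

noncomputable def pair (a b : ℕ) : Fin 2 →₀ ℕ := Finsupp.single 0 a + Finsupp.single 1 b

lemma pair_apply0 (a b : ℕ) : pair a b 0 = a := by
  simp [pair, Finsupp.single_apply]

lemma pair_apply1 (a b : ℕ) : pair a b 1 = b := by
  simp [pair, Finsupp.single_apply]

/-- Any polynomial in `J₀, J₊, J₋` which Poisson-commutes with `J₋` and with
`J₀` is a polynomial in `J₋` and the Casimir `W = J₊J₋ + J₀²`. -/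
theorem sl2_commutant_generated_by_Jminus_and_W
    (P : MvPolynomial (Fin 3) ℝ)
    (hm : sl2PB P (X 2) = 0) (h0 : sl2PB P (X 0) = 0) :
    ∃ F : MvPolynomial (Fin 2) ℝ,
      P = aeval ![(X 2 : MvPolynomial (Fin 3) ℝ), X 1 * X 2 + (X 0)^2] F := by
  have hm' : X 2 * pderiv 0 P = 2 * X 0 * pderiv 1 P := by
    simp only [sl2PB, pderiv_X_self, pderiv_X_of_ne (show (2:Fin 3) ≠ 0 from by decide),
      pderiv_X_of_ne (show (2:Fin 3) ≠ 1 from by decide), mul_zero, zero_mul, mul_one,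
      one_mul, sub_zero, zero_sub, mul_neg] at hm
    linear_combination -hm
  have h0' : X 1 * pderiv 1 P = X 2 * pderiv 2 P := by
    simp only [sl2PB, pderiv_X_self, pderiv_X_of_ne (show (0:Fin 3) ≠ 1 from by decide),
      pderiv_X_of_ne (show (0:Fin 3) ≠ 2 from by decide), mul_zero, zero_mul, mul_one,
      one_mul, sub_zero, zero_sub, mul_neg] at h0
    linear_combination -h0
  have hsupp : ∀ m ∈ P.support, m 1 = m 2 := by
    intro m hmem
    have h1 := coeff_X_mul_pderiv 1 P m
    have h2 := coeff_X_mul_pderiv 2 P m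
    have heq : (m 1 : ℝ) * coeff m P = (m 2 : ℝ) * coeff m P := by
      rw [← h1, ← h2, h0']
    have hc : coeff m P ≠ 0 := mem_support_iff.mp hmem
    exact_mod_cast mul_right_cancel₀ hc heq
  set g : MvPolynomial (Fin 2) ℝ :=
    ∑ m ∈ P.support, monomial (pair (m 0) (m 1)) (coeff m P)
    with hgdef
  have hPg : aeval ![(X 0 : MvPolynomial (Fin 3) ℝ), X 1 * X 2] g = P := by
    rw [hgdef, map_sum]
    conv_rhs => rw [P.as_sum]
    refine Finset.sum_congr rfl fun m hmem => ?_
    rw [aeval_monomial_fin2, monomial_fin3, ← hsupp m hmem]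
    rw [pair_apply0, pair_apply1]
    simp only [Matrix.cons_val_zero, Matrix.cons_val_one, Matrix.head_cons, algebraMap_eq]
    rw [mul_pow]
    ring
  -- chain rule for the two substitutions
  have hch0 := pderiv_aeval_chain ![(X 0 : MvPolynomial (Fin 3) ℝ), X 1 * X 2] 0 g
  have hch1 := pderiv_aeval_chain ![(X 0 : MvPolynomial (Fin 3) ℝ), X 1 * X 2] 1 g
  rw [hPg, Fin.sum_univ_two] at hch0 hch1
  simp only [Matrix.cons_val_zero, Matrix.cons_val_one, Matrix.head_cons, pderiv_X_self,
    pderiv_mul, pderiv_X_of_ne (show (1:Fin 3) ≠ 0 from by decide),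
    pderiv_X_of_ne (show (2:Fin 3) ≠ 0 from by decide),
    pderiv_X_of_ne (show (0:Fin 3) ≠ 1 from by decide),
    pderiv_X_of_ne (show (2:Fin 3) ≠ 1 from by decide),
    mul_zero, zero_mul, mul_one, one_mul, add_zero, zero_add] at hch0 hch1
  -- hch0 : pderiv 0 P = aeval f (pderiv 0 g)
  -- hch1 : pderiv 1 P = aeval f (pderiv 1 g) * X 2
  have hb : pderiv 0 g = 2 * X 0 * pderiv 1 g := by
    have hx : (X 2 : MvPolynomial (Fin 3) ℝ) ≠ 0 := X_ne_zero 2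
    have h3 : X 2 * aeval ![(X 0 : MvPolynomial (Fin 3) ℝ), X 1 * X 2] (pderiv 0 g)
        = X 2 * (aeval ![(X 0 : MvPolynomial (Fin 3) ℝ), X 1 * X 2] (2 * X 0 * pderiv 1 g)) := by
      rw [← hch0]
      rw [map_mul, map_mul, aeval_X]
      simp only [Matrix.cons_val_zero, map_ofNat]
      linear_combination hm' + 2 * X 0 * hch1
    have h4 := mul_left_cancel₀ hx h3
    have h5 : aeval ![(X 0 : MvPolynomial (Fin 3) ℝ), X 1 * X 2]
        (pderiv 0 g - 2 * X 0 * pderiv 1 g) = 0 := by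
      rw [map_sub, h4, sub_self]
    exact sub_eq_zero.mp (aeval_X0X1X2_inj _ h5)
  -- second substitution
  set h : MvPolynomial (Fin 2) ℝ := aeval ![(X 0 : MvPolynomial (Fin 2) ℝ), X 1 - X 0 ^ 2] g
    with hhdef
  have hch := pderiv_aeval_chain ![(X 0 : MvPolynomial (Fin 2) ℝ), X 1 - X 0 ^ 2] 0 g
  rw [Fin.sum_univ_two, ← hhdef] at hch
  simp only [Matrix.cons_val_zero, Matrix.cons_val_one, Matrix.head_cons, pderiv_X_self,
    map_sub, pderiv_pow, pderiv_X_of_ne (show (1:Fin 2) ≠ 0 from by decide),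
    mul_zero, zero_mul, mul_one, one_mul, add_zero, zero_add, zero_sub, mul_neg] at hch
  have hc : pderiv 0 h = 0 := by
    rw [hch, hb, map_mul, map_mul, aeval_X]
    simp only [Matrix.cons_val_zero, map_ofNat, Nat.cast_ofNat, pow_one]
    ring
  have hd : ∀ m ∈ h.support, m 0 = 0 := by
    intro m hmem
    by_contra h00
    set m' : Fin 2 →₀ ℕ := m - Finsupp.single 0 1 with hm'def
    have h1 : m' + Finsupp.single 0 1 = m := by
      rw [hm'def]
      ext j
      by_cases hj : j = 0
      · subst hj; simp [Nat.sub_add_cancel (Nat.one_le_iff_ne_zero.mpr h00)]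
      · have : (0 : Fin 2) ≠ j := fun h' => hj h'.symm
        simp [Finsupp.single_apply, this]
    have h2 := coeff_pderiv' 0 h m'
    rw [hc, h1] at h2
    simp only [coeff_zero] at h2
    have h4 : coeff m h = 0 := by
      rcases mul_eq_zero.mp h2.symm with hq | hq
      · exfalso
        have hge : (0:ℝ) ≤ (m' 0 : ℝ) := Nat.cast_nonneg _
        linarith
      · exact hq
    exact mem_support_iff.mp hmem h4
  refine ⟨h, ?_⟩
  have hgh : aeval ![(X 0 : MvPolynomial (Fin 2) ℝ), X 1 + X 0 ^ 2] h = g := by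
    rw [hhdef, comp_aeval_apply]
    have heq : (fun i => aeval ![(X 0 : MvPolynomial (Fin 2) ℝ), X 1 + X 0 ^ 2]
        (![(X 0 : MvPolynomial (Fin 2) ℝ), X 1 - X 0 ^ 2] i)) = X := by
      funext i
      fin_cases i
      · show aeval ![(X 0 : MvPolynomial (Fin 2) ℝ), X 1 + X 0 ^ 2] (X 0) = X 0
        simp
      · show aeval ![(X 0 : MvPolynomial (Fin 2) ℝ), X 1 + X 0 ^ 2] (X 1 - X 0 ^ 2) = X 1
        rw [map_sub, map_pow, aeval_X, aeval_X]
        simp only [Matrix.cons_val_one, Matrix.head_cons, Matrix.cons_val_zero]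
        ring
    rw [heq, aeval_X_left_apply]
  have hPh : P = aeval ![(X 0 : MvPolynomial (Fin 3) ℝ), X 1 * X 2 + X 0 ^ 2] h := by
    rw [← hPg, ← hgh, comp_aeval_apply]
    have heq2 : (fun i => aeval ![(X 0 : MvPolynomial (Fin 3) ℝ), X 1 * X 2]
        (![(X 0 : MvPolynomial (Fin 2) ℝ), X 1 + X 0 ^ 2] i))
        = ![(X 0 : MvPolynomial (Fin 3) ℝ), X 1 * X 2 + X 0 ^ 2] := by
      funext i
      fin_cases i
      · show aeval ![(X 0 : MvPolynomial (Fin 3) ℝ), X 1 * X 2] (X 0 : MvPolynomial (Fin 2) ℝ)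
            = X 0
        simp
      · show aeval ![(X 0 : MvPolynomial (Fin 3) ℝ), X 1 * X 2]
            ((X 1 : MvPolynomial (Fin 2) ℝ) + X 0 ^ 2) = X 1 * X 2 + X 0 ^ 2
        rw [map_add, map_pow, aeval_X, aeval_X]
        simp only [Matrix.cons_val_one, Matrix.head_cons, Matrix.cons_val_zero]
    rw [heq2]
  rw [hPh]
  conv_lhs => rw [h.as_sum]
  conv_rhs => rw [h.as_sum]
  rw [map_sum, map_sum]
  refine Finset.sum_congr rfl fun m hmem => ?_
  rw [aeval_monomial_fin2, aeval_monomial_fin2, hd m hmem]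
  simp
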